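/- Let $0 < \beta < 1$ and let $t \geq 2$ be an integer. Then $\sum_{k=1}^{t-1} \beta^k \sum_{j=1}^{k} \frac{1}{\sqrt{t-j}} \leq \frac{\sqrt{2}\, \beta}{(1-\beta)^2 \sqrt{t}} + \frac{\beta^{\lfloor t/2 \rfloor + 1}}{(1-\beta)^2}$. -/

import Mathlib

/-- Explicit bound on `S(t) = ∑_{k=1}^{t-1} β^k ∑_{j=1}^{k} 1/√(t-j)`. -/
theorem stmt14 (β : ℝ) (hβ0 : 0 < β) (hβ1 : β < 1) (t : ℕ) (ht : 2 ≤ t) :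
    ∑ k ∈ Finset.Icc 1 (t - 1), β ^ k * ∑ j ∈ Finset.Icc 1 k, 1 / Real.sqrt ((t : ℝ) - j)
      ≤ Real.sqrt 2 * β / ((1 - β) ^ 2 * Real.sqrt t) + β ^ (t / 2 + 1) / (1 - β) ^ 2 := by
  have hβ' : (0:ℝ) < 1 - β := by linarith
  set n := t - 1 with hn
  set m := t / 2 with hm
  set g : ℕ → ℝ := fun j => 1 / Real.sqrt ((t : ℝ) - j) with hg
  have geom : ∀ N : ℕ, ∑ i ∈ Finset.range N, β ^ i ≤ 1 / (1 - β) := by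
    intro N
    have h1 : ∑ i ∈ Finset.range N, β ^ i = (1 - β ^ N) / (1 - β) := by
      rw [geom_sum_eq (ne_of_lt hβ1), div_eq_div_iff (by linarith) (by linarith : (1:ℝ)-β ≠ 0)]
      ring
    rw [h1]
    gcongr
    nlinarith [pow_nonneg hβ0.le N]
  have tail : ∀ a b : ℕ, ∑ k ∈ Finset.Icc a b, β ^ k ≤ β ^ a / (1 - β) := by
    intro a b
    rw [← Finset.Ico_add_one_right_eq_Icc, Finset.sum_Ico_eq_sum_range]
    simp_rw [pow_add]
    rw [← Finset.mul_sum]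
    calc β ^ a * ∑ i ∈ Finset.range (b + 1 - a), β ^ i
        ≤ β ^ a * (1 / (1 - β)) := by
          exact mul_le_mul_of_nonneg_left (geom _) (pow_nonneg hβ0.le a)
      _ = β ^ a / (1 - β) := by ring
  have hswap : ∑ k ∈ Finset.Icc 1 n, β ^ k * ∑ j ∈ Finset.Icc 1 k, g j
      = ∑ j ∈ Finset.Icc 1 n, g j * ∑ k ∈ Finset.Icc j n, β ^ k := by
    simp_rw [Finset.mul_sum]
    rw [Finset.sum_comm' (t' := Finset.Icc 1 n) (s' := fun j => Finset.Icc j n)]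
    · simp_rw [mul_comm]
    · intro k j
      simp only [Finset.mem_Icc]
      omega
  have hgpos : ∀ j ∈ Finset.Icc 1 n, 0 ≤ g j := by
    intro j _
    exact div_nonneg zero_le_one (Real.sqrt_nonneg _)
  have step1 : ∑ j ∈ Finset.Icc 1 n, g j * ∑ k ∈ Finset.Icc j n, β ^ k
      ≤ ∑ j ∈ Finset.Icc 1 n, g j * (β ^ j / (1 - β)) := by
    apply Finset.sum_le_sum
    intro j hj
    exact mul_le_mul_of_nonneg_left (tail j n) (hgpos j hj)
  have hmn : m ≤ n := by omega
  have hsplit : Finset.Icc 1 n = Finset.Ioc 0 m ∪ Finset.Ioc m n := by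
    rw [Finset.Ioc_union_Ioc_eq_Ioc (Nat.zero_le m) hmn]
    rw [← Finset.Icc_add_one_left_eq_Ioc, zero_add]
  have hdisj : Disjoint (Finset.Ioc 0 m) (Finset.Ioc m n) := by
    apply Finset.disjoint_left.mpr
    intro a ha hb
    simp only [Finset.mem_Ioc] at ha hb
    omega
  have hsum : ∑ j ∈ Finset.Icc 1 n, g j * (β ^ j / (1 - β))
      = ∑ j ∈ Finset.Ioc 0 m, g j * (β ^ j / (1 - β))
        + ∑ j ∈ Finset.Ioc m n, g j * (β ^ j / (1 - β)) := by
    rw [hsplit, Finset.sum_union hdisj]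
  have htR : (0:ℝ) < t := by positivity
  have hsqrt_t : (0:ℝ) < Real.sqrt t := Real.sqrt_pos.mpr htR
  -- bound g j for j ≤ m
  have hg1 : ∀ j ∈ Finset.Ioc 0 m, g j ≤ Real.sqrt 2 / Real.sqrt t := by
    intro j hj
    simp only [Finset.mem_Ioc] at hj
    have hjle : (j : ℝ) ≤ (t : ℝ) / 2 := by
      have : (j : ℝ) ≤ (m : ℝ) := by exact_mod_cast hj.2
      have : (m : ℝ) ≤ (t : ℝ) / 2 := by
        rw [le_div_iff₀ (by norm_num : (0:ℝ) < 2)]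
        exact_mod_cast Nat.div_mul_le_self t 2
      linarith
    have h2 : (t : ℝ) / 2 ≤ (t : ℝ) - j := by linarith
    have hpos : (0:ℝ) < (t:ℝ)/2 := by linarith
    have : Real.sqrt ((t:ℝ)/2) ≤ Real.sqrt ((t:ℝ) - j) := Real.sqrt_le_sqrt h2
    have hs2 : (0:ℝ) < Real.sqrt ((t:ℝ)/2) := Real.sqrt_pos.mpr hpos
    have hle : g j ≤ 1 / Real.sqrt ((t:ℝ)/2) := by
      rw [hg]
      exact one_div_le_one_div_of_le hs2 this
    have heq : (1:ℝ) / Real.sqrt ((t:ℝ)/2) = Real.sqrt 2 / Real.sqrt t := by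
      rw [Real.sqrt_div htR.le, one_div_div]
    rw [heq] at hle
    exact hle
  have hg2 : ∀ j ∈ Finset.Ioc m n, g j ≤ 1 := by
    intro j hj
    simp only [Finset.mem_Ioc] at hj
    have h1 : (1:ℝ) ≤ (t:ℝ) - j := by
      have : (j:ℝ) ≤ (n:ℝ) := by exact_mod_cast hj.2
      have : (n:ℝ) = (t:ℝ) - 1 := by
        rw [hn]; push_cast [Nat.cast_sub (by omega : 1 ≤ t)]; ring
      linarith
    have : (1:ℝ) ≤ Real.sqrt ((t:ℝ) - j) := by
      rw [show (1:ℝ) = Real.sqrt 1 from (Real.sqrt_one).symm]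
      exact Real.sqrt_le_sqrt h1
    rw [hg]
    calc 1 / Real.sqrt ((t:ℝ) - j) ≤ 1 / 1 := one_div_le_one_div_of_le one_pos this
      _ = 1 := by norm_num
  -- part 1
  have part1 : ∑ j ∈ Finset.Ioc 0 m, g j * (β ^ j / (1 - β))
      ≤ Real.sqrt 2 * β / ((1 - β) ^ 2 * Real.sqrt t) := by
    have h1 : ∑ j ∈ Finset.Ioc 0 m, g j * (β ^ j / (1 - β))
        ≤ ∑ j ∈ Finset.Ioc 0 m, (Real.sqrt 2 / Real.sqrt t) * (β ^ j / (1 - β)) := by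
      apply Finset.sum_le_sum
      intro j hj
      apply mul_le_mul_of_nonneg_right (hg1 j hj)
      positivity
    have h2 : ∑ j ∈ Finset.Ioc 0 m, (Real.sqrt 2 / Real.sqrt t) * (β ^ j / (1 - β))
        = (Real.sqrt 2 / Real.sqrt t / (1 - β)) * ∑ j ∈ Finset.Ioc 0 m, β ^ j := by
      rw [Finset.mul_sum]
      congr 1
      ext j
      ring
    have h3 : ∑ j ∈ Finset.Ioc 0 m, β ^ j ≤ β / (1 - β) := by
      rw [← Finset.Icc_add_one_left_eq_Ioc]
      calc ∑ j ∈ Finset.Icc 1 m, β ^ j ≤ β ^ 1 / (1 - β) := tail 1 m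
        _ = β / (1 - β) := by rw [pow_one]
    calc ∑ j ∈ Finset.Ioc 0 m, g j * (β ^ j / (1 - β))
        ≤ (Real.sqrt 2 / Real.sqrt t / (1 - β)) * ∑ j ∈ Finset.Ioc 0 m, β ^ j := by
          rw [← h2]; exact h1
      _ ≤ (Real.sqrt 2 / Real.sqrt t / (1 - β)) * (β / (1 - β)) := by
          apply mul_le_mul_of_nonneg_left h3
          positivity
      _ = Real.sqrt 2 * β / ((1 - β) ^ 2 * Real.sqrt t) := by
          field_simp
  -- part 2
  have part2 : ∑ j ∈ Finset.Ioc m n, g j * (β ^ j / (1 - β))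
      ≤ β ^ (m + 1) / (1 - β) ^ 2 := by
    have h1 : ∑ j ∈ Finset.Ioc m n, g j * (β ^ j / (1 - β))
        ≤ ∑ j ∈ Finset.Ioc m n, β ^ j / (1 - β) := by
      apply Finset.sum_le_sum
      intro j hj
      calc g j * (β ^ j / (1 - β)) ≤ 1 * (β ^ j / (1 - β)) := by
            apply mul_le_mul_of_nonneg_right (hg2 j hj)
            positivity
        _ = β ^ j / (1 - β) := one_mul _
    have h2 : ∑ j ∈ Finset.Ioc m n, β ^ j / (1 - β)
        = (1 / (1 - β)) * ∑ j ∈ Finset.Ioc m n, β ^ j := by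
      rw [Finset.mul_sum]
      congr 1; ext j; ring
    have h3 : ∑ j ∈ Finset.Ioc m n, β ^ j ≤ β ^ (m + 1) / (1 - β) := by
      rw [← Finset.Icc_add_one_left_eq_Ioc]
      exact tail (m + 1) n
    calc ∑ j ∈ Finset.Ioc m n, g j * (β ^ j / (1 - β))
        ≤ (1 / (1 - β)) * ∑ j ∈ Finset.Ioc m n, β ^ j := by rw [← h2]; exact h1
      _ ≤ (1 / (1 - β)) * (β ^ (m + 1) / (1 - β)) := by
          apply mul_le_mul_of_nonneg_left h3
          positivity
      _ = β ^ (m + 1) / (1 - β) ^ 2 := by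
          field_simp
  calc ∑ k ∈ Finset.Icc 1 n, β ^ k * ∑ j ∈ Finset.Icc 1 k, g j
      = ∑ j ∈ Finset.Icc 1 n, g j * ∑ k ∈ Finset.Icc j n, β ^ k := hswap
    _ ≤ ∑ j ∈ Finset.Icc 1 n, g j * (β ^ j / (1 - β)) := step1
    _ = _ + _ := hsum
    _ ≤ Real.sqrt 2 * β / ((1 - β) ^ 2 * Real.sqrt t) + β ^ (m + 1) / (1 - β) ^ 2 :=
        add_le_add part1 part2
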